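/- The number b̂_n of type (B_n,1) Le-diagrams of maximal shape satisfies the generating function identity Σ_{n≥0} b̂_n x^n = (1-2x)/(1-4x+2x^2). -/

import Mathlib

attribute [local instance] Classical.propDecidable

/-- A type `(B_n,1)` Le-diagram of maximal shape (see the paper): a filling of `2n-1` boxes
by `0`/`+` (`true` = `+`) such that if a `0` occurs in a position strictly right of the
middle, then the box immediately to its left and its conjugate do not both contain `+`. -/
def IsLeB1 (n : ℕ) (f : Fin (2 * n - 1) → Bool) : Prop :=
  ∀ j : ℕ, ∀ hj : j < 2 * n - 1, ∀ _hn : n ≤ j, f ⟨j, hj⟩ = false →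
    ¬ (f ⟨j - 1, by omega⟩ = true ∧ f ⟨2 * n - 1 - j, by omega⟩ = true)

/-- The number of type `(B_n,1)` Le-diagrams of maximal shape. -/
noncomputable def bhatNum (n : ℕ) : ℕ :=
  (Finset.univ.filter (IsLeB1 n)).card

-- generic index congruence
theorem fcongr {N : ℕ} (f : Fin N → Bool) {a b : ℕ} (ha : a < N) (hb : b < N)
    (h : a = b) : f ⟨a, ha⟩ = f ⟨b, hb⟩ := by subst h; rfl

def shiftf (n : ℕ) (f : Fin (2*(n+2)-1) → Bool) : Fin (2*(n+1)-1) → Bool :=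
  fun i => f ⟨i.val+1, by omega⟩

theorem isLe_iff (n : ℕ) (f : Fin (2*(n+2)-1) → Bool) :
    IsLeB1 (n+2) f ↔ IsLeB1 (n+1) (shiftf n f) ∧
      (f ⟨2*n+2, by omega⟩ = false →
        ¬ (shiftf n f ⟨2*n, by omega⟩ = true ∧ shiftf n f ⟨0, by omega⟩ = true)) := by
  constructor
  · intro hf
    refine ⟨?_, ?_⟩
    · intro j hj hn hfalse
      have h1 := hf (j+1) (by omega) (by omega)
        (by rw [show f ⟨j+1, by omega⟩ = shiftf n f ⟨j, hj⟩ from rfl]; exact hfalse)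
      rintro ⟨ha, hb⟩
      refine h1 ⟨?_, ?_⟩
      · rw [fcongr f (by omega) (by omega) (show j+1-1 = (j-1)+1 by omega)]; exact ha
      · rw [fcongr f (by omega) (by omega) (show 2*(n+2)-1-(j+1) = (2*(n+1)-1-j)+1 by omega)]
        exact hb
    · intro hx
      have h1 := hf (2*n+2) (by omega) (by omega)
        (by rw [fcongr f (by omega) (by omega) (rfl : 2*n+2 = 2*n+2)]; exact hx)
      rintro ⟨ha, hb⟩
      refine h1 ⟨?_, ?_⟩
      · rw [fcongr f (by omega) (by omega) (show 2*n+2-1 = 2*n+1 by omega)]; exact ha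
      · rw [fcongr f (by omega) (by omega) (show 2*(n+2)-1-(2*n+2) = 1 by omega)]; exact hb
  · rintro ⟨hg, hx⟩ j hj hn hfalse
    rcases eq_or_lt_of_le (show j ≤ 2*n+2 by omega) with hj2 | hj2
    · -- j = 2n+2
      rintro ⟨ha, hb⟩
      refine hx ?_ ⟨?_, ?_⟩
      · rw [fcongr f (by omega) hj hj2.symm]; exact hfalse
      · show f ⟨2*n+1, by omega⟩ = true
        rw [fcongr f (by omega) (by omega) (show 2*n+1 = j - 1 by omega)]; exact ha
      · show f ⟨1, by omega⟩ = true
        rw [fcongr f (by omega) (by omega) (show 1 = 2*(n+2)-1-j by omega)]; exact hb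
    · -- j ≤ 2n+1
      have h1 := hg (j-1) (by omega) (by omega)
        (by show f ⟨j-1+1, by omega⟩ = false
            rw [fcongr f (by omega) hj (show j-1+1 = j by omega)]; exact hfalse)
      rintro ⟨ha, hb⟩
      refine h1 ⟨?_, ?_⟩
      · show f ⟨(j-1-1)+1, by omega⟩ = true
        rw [fcongr f (by omega) (by omega) (show j-1-1+1 = j-1 by omega)]; exact ha
      · show f ⟨(2*(n+1)-1-(j-1))+1, by omega⟩ = true
        rw [fcongr f (by omega) (by omega) (show 2*(n+1)-1-(j-1)+1 = 2*(n+2)-1-j by omega)]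
        exact hb

def assemble (n : ℕ) (b : Bool) (g : Fin (2*(n+1)-1) → Bool) (x : Bool) :
    Fin (2*(n+2)-1) → Bool :=
  fun j => if h0 : j.val = 0 then b else if hl : j.val = 2*n+2 then x
    else g ⟨j.val - 1, by omega⟩

theorem shiftf_assemble (n : ℕ) (b : Bool) (g : Fin (2*(n+1)-1) → Bool) (x : Bool) :
    shiftf n (assemble n b g x) = g := by
  funext i
  show assemble n b g x ⟨i.val+1, by omega⟩ = g i
  unfold assemble
  rw [dif_neg (by omega : ¬ (i.val+1 = 0)), dif_neg (by omega : ¬ (i.val+1 = 2*n+2))]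
  congr 1

theorem assemble_zero (n : ℕ) (b : Bool) (g : Fin (2*(n+1)-1) → Bool) (x : Bool) :
    assemble n b g x ⟨0, by omega⟩ = b := by
  unfold assemble
  rw [dif_pos rfl]

theorem assemble_last (n : ℕ) (b : Bool) (g : Fin (2*(n+1)-1) → Bool) (x : Bool) :
    assemble n b g x ⟨2*n+2, by omega⟩ = x := by
  unfold assemble
  rw [dif_neg (by omega : ¬ (2*n+2 = 0)), dif_pos rfl]

theorem assemble_shiftf (n : ℕ) (f : Fin (2*(n+2)-1) → Bool) :
    assemble n (f ⟨0, by omega⟩) (shiftf n f) (f ⟨2*n+2, by omega⟩) = f := by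
  funext j
  unfold assemble shiftf
  split_ifs with h1 h2
  · congr 1; exact Fin.ext h1.symm
  · congr 1; exact Fin.ext h2.symm
  · congr 1; exact Fin.ext (by simp; omega)

def PP (n : ℕ) (p : (Fin (2*(n+1)-1) → Bool) × Bool) : Prop :=
  IsLeB1 (n+1) p.1 ∧ (p.2 = false →
    ¬ (p.1 ⟨2*n, by omega⟩ = true ∧ p.1 ⟨0, by omega⟩ = true))

noncomputable def equiv1 (n : ℕ) :
    {f : Fin (2*(n+2)-1) → Bool // IsLeB1 (n+2) f} ≃
      Bool × {p : (Fin (2*(n+1)-1) → Bool) × Bool // PP n p} where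
  toFun f := (f.1 ⟨0, by omega⟩,
    ⟨(shiftf n f.1, f.1 ⟨2*n+2, by omega⟩), (isLe_iff n f.1).mp f.2⟩)
  invFun p := ⟨assemble n p.1 p.2.1.1 p.2.1.2, by
    apply (isLe_iff n _).mpr
    rw [shiftf_assemble, assemble_last]
    exact p.2.2⟩
  left_inv f := Subtype.ext (assemble_shiftf n f.1)
  right_inv p := by
    obtain ⟨b, ⟨⟨g, x⟩, h⟩⟩ := p
    simp only [Prod.mk.injEq, Subtype.mk.injEq]
    refine ⟨?_, Subtype.ext (Prod.ext ?_ ?_)⟩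
    · exact assemble_zero n b g x
    · exact shiftf_assemble n b g x
    · exact assemble_last n b g x

def boolSplit {Y : Type*} (P : Y × Bool → Prop) :
    {p : Y × Bool // P p} ≃ {y // P (y, true)} ⊕ {y // P (y, false)} where
  toFun p := if h : p.1.2 = true
    then Sum.inl ⟨p.1.1, by have hp := p.2; rwa [show p.1 = (p.1.1, true) by
      cases hq : p.1; simp_all] at hp⟩
    else Sum.inr ⟨p.1.1, by have hp := p.2; rwa [show p.1 = (p.1.1, false) by
      cases hq : p.1; simp_all] at hp⟩
  invFun := Sum.elim (fun y => ⟨(y.1, true), y.2⟩) (fun y => ⟨(y.1, false), y.2⟩)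
  left_inv := by rintro ⟨⟨y, (b|b)⟩, h⟩ <;> simp
  right_inv := by rintro (y|y) <;> simp

noncomputable def TNum (n : ℕ) : ℕ :=
  (Finset.univ.filter (fun f : Fin (2*(n+1)-1) → Bool =>
    IsLeB1 (n+1) f ∧ f ⟨2*n, by omega⟩ = true ∧ f ⟨0, by omega⟩ = true)).card

noncomputable def equiv2 (n : ℕ) :
    {f : Fin (2*(n+2)-1) → Bool // IsLeB1 (n+2) f ∧
      f ⟨2*(n+1), by omega⟩ = true ∧ f ⟨0, by omega⟩ = true} ≃
    {g : Fin (2*(n+1)-1) → Bool // IsLeB1 (n+1) g} where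
  toFun f := ⟨shiftf n f.1, ((isLe_iff n f.1).mp f.2.1).1⟩
  invFun g := ⟨assemble n true g.1 true, by
    refine ⟨(isLe_iff n _).mpr ⟨by rw [shiftf_assemble]; exact g.2, ?_⟩, ?_, ?_⟩
    · rw [assemble_last]; simp
    · rw [fcongr (assemble n true g.1 true) (by omega) (by omega)
        (show 2*(n+1) = 2*n+2 by ring)]
      exact assemble_last n true g.1 true
    · exact assemble_zero n true g.1 true⟩
  left_inv f := by
    obtain ⟨f, hf, hl, h0⟩ := f
    apply Subtype.ext
    show assemble n true (shiftf n f) true = f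
    have hl' : f ⟨2*n+2, by omega⟩ = true := by
      rw [fcongr f (by omega) (by omega) (show 2*n+2 = 2*(n+1) by ring)]; exact hl
    have h := assemble_shiftf n f
    rwa [h0, hl'] at h
  right_inv g := Subtype.ext (shiftf_assemble n true g.1 true)

theorem bhat_card (n : ℕ) : bhatNum n = Fintype.card {f : Fin (2*n-1) → Bool // IsLeB1 n f} := by
  classical
  rw [bhatNum, Fintype.card_subtype]

theorem T_card (n : ℕ) : TNum n = Fintype.card {f : Fin (2*(n+1)-1) → Bool //
    IsLeB1 (n+1) f ∧ f ⟨2*n, by omega⟩ = true ∧ f ⟨0, by omega⟩ = true} := by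
  classical
  rw [TNum, Fintype.card_subtype]

theorem card_P_true (n : ℕ) :
    Fintype.card {y : Fin (2*(n+1)-1) → Bool // PP n (y, true)} = bhatNum (n+1) := by
  rw [bhat_card]
  exact Fintype.card_congr (Equiv.subtypeEquivRight (fun y => by simp [PP]))

theorem card_P_false (n : ℕ) :
    Fintype.card {y : Fin (2*(n+1)-1) → Bool // PP n (y, false)} + TNum n = bhatNum (n+1) := by
  classical
  have h1 : Fintype.card {y : Fin (2*(n+1)-1) → Bool // PP n (y, false)} =
      (Finset.univ.filter (fun y : Fin (2*(n+1)-1) → Bool => PP n (y, false))).card :=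
    Fintype.card_subtype _
  have e1 : (Finset.univ.filter (fun y : Fin (2*(n+1)-1) → Bool => PP n (y, false))) =
      (Finset.univ.filter (IsLeB1 (n+1))).filter (fun y => ¬ (y ⟨2*n, by omega⟩ = true ∧
        y ⟨0, by omega⟩ = true)) := by
    ext y
    simp only [Finset.mem_filter, Finset.mem_univ, true_and, PP]
    constructor
    · rintro ⟨h, h'⟩; exact ⟨h, h' trivial⟩
    · rintro ⟨h, h'⟩; exact ⟨h, fun _ => h'⟩
  have e2 : (Finset.univ.filter (fun f : Fin (2*(n+1)-1) → Bool =>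
      IsLeB1 (n+1) f ∧ f ⟨2*n, by omega⟩ = true ∧ f ⟨0, by omega⟩ = true)) =
      (Finset.univ.filter (IsLeB1 (n+1))).filter (fun y => (y ⟨2*n, by omega⟩ = true ∧
        y ⟨0, by omega⟩ = true)) := by
    ext y
    simp only [Finset.mem_filter, Finset.mem_univ, true_and, and_assoc]
  rw [h1, e1, TNum, e2, bhatNum, add_comm]
  exact Finset.card_filter_add_card_filter_not _

theorem card_split (n : ℕ) :
    bhatNum (n+2) = 2 * (bhatNum (n+1) +
      Fintype.card {y : Fin (2*(n+1)-1) → Bool // PP n (y, false)}) := by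
  rw [bhat_card (n+2), Fintype.card_congr (equiv1 n), Fintype.card_prod, Fintype.card_bool,
    Fintype.card_congr (boolSplit (PP n)), Fintype.card_sum, card_P_true]

theorem T_succ (n : ℕ) : TNum (n+1) = bhatNum (n+1) := by
  rw [T_card (n+1), Fintype.card_congr (equiv2 n), bhat_card (n+1)]

theorem isLe_one (f : Fin (2*1-1) → Bool) : IsLeB1 1 f := by
  intro j hj hn
  omega

theorem bhat_zero : bhatNum 0 = 1 := by
  rw [bhatNum, Finset.filter_true_of_mem (fun f _ => by intro j hj; omega)]
  simp

theorem bhat_one : bhatNum 1 = 2 := by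
  rw [bhatNum, Finset.filter_true_of_mem (fun f _ => by intro j hj hn; omega)]
  simp

theorem T_zero : TNum 0 = 1 := by
  classical
  rw [TNum]
  have : (Finset.univ.filter (fun f : Fin (2*(0+1)-1) → Bool =>
      IsLeB1 (0+1) f ∧ f ⟨2*0, by omega⟩ = true ∧ f ⟨0, by omega⟩ = true)) =
      {fun _ => true} := by
    ext f
    simp only [Finset.mem_filter, Finset.mem_univ, true_and, Finset.mem_singleton]
    constructor
    · rintro ⟨-, h, -⟩
      funext i
      have hi : i = ⟨0, by omega⟩ := by
        apply Fin.ext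
        omega
      rw [hi, h]
    · rintro rfl
      exact ⟨isLe_one _, rfl, rfl⟩
  rw [this, Finset.card_singleton]

theorem T_eq (n : ℕ) : TNum n = bhatNum n := by
  cases n with
  | zero => rw [T_zero, bhat_zero]
  | succ m => exact T_succ m

theorem bhat_rec (n : ℕ) : bhatNum (n+2) + 2 * bhatNum n = 4 * bhatNum (n+1) := by
  have h1 := card_split n
  have h2 := card_P_false n
  have h3 := T_eq n
  omega

theorem qcoeff (k : ℕ) :
    (PowerSeries.coeff (R := ℚ) k) (1 - 4 * PowerSeries.X + 2 * PowerSeries.X ^ 2) =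
    if k = 0 then 1 else if k = 1 then -4 else if k = 2 then 2 else 0 := by
  have h4 : (4 : PowerSeries ℚ) = PowerSeries.C 4 := by simp [map_ofNat]
  have h2 : (2 : PowerSeries ℚ) = PowerSeries.C 2 := by simp [map_ofNat]
  rw [map_add, map_sub, h4, h2, PowerSeries.coeff_C_mul, PowerSeries.coeff_C_mul,
    PowerSeries.coeff_one, PowerSeries.coeff_X, PowerSeries.coeff_X_pow]
  rcases k with _|_|_|k <;> norm_num


/-- The generating function identity `Σ b̂_n xⁿ = (1-2x)/(1-4x+2x²)`. -/
theorem bhatNum_generating_function :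
    (PowerSeries.mk fun n => (bhatNum n : ℚ)) *
        (1 - 4 * PowerSeries.X + 2 * PowerSeries.X ^ 2) =
      1 - 2 * PowerSeries.X := by
  rw [mul_comm]
  ext n
  rw [PowerSeries.coeff_mul, Finset.Nat.sum_antidiagonal_eq_sum_range_succ_mk]
  have hR : (PowerSeries.coeff (R := ℚ) n) (1 - 2 * PowerSeries.X) =
      if n = 0 then 1 else if n = 1 then -2 else 0 := by
    have h2 : (2 : PowerSeries ℚ) = PowerSeries.C 2 := by simp [map_ofNat]
    rw [map_sub, h2, PowerSeries.coeff_C_mul, PowerSeries.coeff_one, PowerSeries.coeff_X]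
    rcases n with _|_|n <;> norm_num
  rw [hR]
  rcases n with _|_|m
  · rw [Finset.sum_range_one]
    simp [qcoeff, PowerSeries.coeff_mk, bhat_zero]
  · rw [Finset.sum_range_succ, Finset.sum_range_one]
    simp [qcoeff, PowerSeries.coeff_mk, bhat_zero, bhat_one]
    norm_num
  · have hsub : ∑ k ∈ Finset.range (m+2+1),
        (PowerSeries.coeff k) (1 - 4 * PowerSeries.X + 2 * PowerSeries.X ^ 2) *
          (PowerSeries.coeff (m+2-k)) (PowerSeries.mk fun n => (bhatNum n : ℚ)) =
        ∑ k ∈ Finset.range 3,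
        (PowerSeries.coeff k) (1 - 4 * PowerSeries.X + 2 * PowerSeries.X ^ 2) *
          (PowerSeries.coeff (m+2-k)) (PowerSeries.mk fun n => (bhatNum n : ℚ)) := by
      refine (Finset.sum_subset (Finset.range_subset_range.mpr (by omega)) ?_).symm
      intro k hk hk3
      simp only [Finset.mem_range] at hk hk3
      rw [qcoeff, if_neg (by omega), if_neg (by omega), if_neg (by omega), zero_mul]
    rw [hsub, Finset.sum_range_succ, Finset.sum_range_succ, Finset.sum_range_one]
    simp only [qcoeff, PowerSeries.coeff_mk]
    norm_num
    have h := bhat_rec m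
    have h' : (bhatNum (m+2) : ℚ) + 2 * bhatNum m = 4 * bhatNum (m+1) := by
      exact_mod_cast congrArg (fun z : ℕ => (z : ℚ)) h
    linarith
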